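/- Assume k ≠ 0, so q₋ < 0 < q₊. For every q ∈ (q₋, q₊) with q ≠ 0, the derivative of r satisfies r'(q) = −q · (q₊ − q)^{q₋/(q₊−q₋)} · (q − q₋)^{−q₊/(q₊−q₋)}; consequently r is strictly increasing on (q₋, 0), strictly decreasing on (0, q₊), and attains its strict maximum on (q₋, q₊) at q = 0 with value r(0) = r_* := |q₊|^{q₊/(q₊−q₋)} · |q₋|^{−q₋/(q₊−q₋)}, i.e. r(q) < r_* for all q ∈ (q₋, q₊) with q ≠ 0. -/

import Mathlib

open Real

/-- For `k ≠ 0` (so `q₋ < 0 < q₊`), on `(q₋, q₊) \ {0}` the derivative of `r` is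
`r'(q) = −q·(q₊−q)^{q₋/(q₊−q₋)}·(q−q₋)^{−q₊/(q₊−q₋)}`; hence `r` is strictly increasing
on `(q₋,0)`, strictly decreasing on `(0,q₊)`, and attains its strict maximum on `(q₋,q₊)`
at `q = 0` with value `r_* = |q₊|^{q₊/(q₊−q₋)}·|q₋|^{−q₋/(q₊−q₋)}`. -/
theorem special_buchdahl_r_peak
    (rs k : ℝ) (hrs : 0 < rs) (hk : k ≠ 0)
    (qp qm : ℝ)
    (hqp : qp = (-rs + Real.sqrt (rs ^ 2 + 3 * k ^ 2)) / 2)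
    (hqm : qm = (-rs - Real.sqrt (rs ^ 2 + 3 * k ^ 2)) / 2)
    (r : ℝ → ℝ)
    (hr : ∀ q : ℝ, r q = |q - qp| ^ (qp / (qp - qm)) * |q - qm| ^ (-(qm / (qp - qm))))
    (rstar : ℝ)
    (hstar : rstar = |qp| ^ (qp / (qp - qm)) * |qm| ^ (-(qm / (qp - qm)))) :
    (∀ q ∈ Set.Ioo qm qp, q ≠ 0 →
        HasDerivAt r
          (-q * (qp - q) ^ (qm / (qp - qm)) * (q - qm) ^ (-(qp / (qp - qm)))) q) ∧
      StrictMonoOn r (Set.Ioo qm 0) ∧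
      StrictAntiOn r (Set.Ioo 0 qp) ∧
      r 0 = rstar ∧
      (∀ q ∈ Set.Ioo qm qp, q ≠ 0 → r q < rstar) := by
  have hD : rs < Real.sqrt (rs ^ 2 + 3 * k ^ 2) := by
    have h3 : 0 < 3 * k ^ 2 := by positivity
    calc rs = Real.sqrt (rs ^ 2) := (Real.sqrt_sq hrs.le).symm
      _ < _ := Real.sqrt_lt_sqrt (by positivity) (by linarith)
  have hD0 : 0 < Real.sqrt (rs ^ 2 + 3 * k ^ 2) := lt_trans hrs hD
  have hqp0 : 0 < qp := by rw [hqp]; linarith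
  have hqm0 : qm < 0 := by rw [hqm]; linarith
  have hne : qp - qm ≠ 0 := by
    have : qm < qp := lt_trans hqm0 hqp0
    linarith
  -- exponent identities
  have ea : qp / (qp - qm) - 1 = qm / (qp - qm) := by field_simp; ring
  have eb : -(qm / (qp - qm)) - 1 = -(qp / (qp - qm)) := by field_simp; ring
  -- derivative, valid everywhere on the open interval (including q = 0)
  have hderiv : ∀ q ∈ Set.Ioo qm qp, HasDerivAt r
      (-q * (qp - q) ^ (qm / (qp - qm)) * (q - qm) ^ (-(qp / (qp - qm)))) q := by
    intro q hq
    obtain ⟨hq1, hq2⟩ := hq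
    have hA : 0 < qp - q := sub_pos.mpr hq2
    have hB : 0 < q - qm := sub_pos.mpr hq1
    have h1 : HasDerivAt (fun x : ℝ => (qp - x) ^ (qp / (qp - qm)))
        ((qp / (qp - qm)) * (qp - q) ^ (qp / (qp - qm) - 1) * (-1)) q := by
      have := (Real.hasDerivAt_rpow_const (x := qp - q) (p := qp / (qp - qm))
        (Or.inl hA.ne')).comp q ((hasDerivAt_id q).const_sub qp)
      simpa [Function.comp_def] using this
    have h2 : HasDerivAt (fun x : ℝ => (x - qm) ^ (-(qm / (qp - qm))))
        ((-(qm / (qp - qm))) * (q - qm) ^ (-(qm / (qp - qm)) - 1) * 1) q := by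
      have := (Real.hasDerivAt_rpow_const (x := q - qm) (p := -(qm / (qp - qm)))
        (Or.inl hB.ne')).comp q ((hasDerivAt_id q).sub_const qm)
      simpa [Function.comp_def] using this
    have hg := h1.mul h2
    have heq : r =ᶠ[nhds q] fun x : ℝ =>
        (qp - x) ^ (qp / (qp - qm)) * (x - qm) ^ (-(qm / (qp - qm))) := by
      filter_upwards [isOpen_Ioo.mem_nhds (⟨hq1, hq2⟩ : q ∈ Set.Ioo qm qp)] with x hx
      rw [hr x, abs_of_neg (sub_neg.mpr hx.2), abs_of_pos (sub_pos.mpr hx.1), neg_sub]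
    have hkey : (qp / (qp - qm)) * (qp - q) ^ (qp / (qp - qm) - 1) * (-1)
          * ((q - qm) ^ (-(qm / (qp - qm))))
        + (qp - q) ^ (qp / (qp - qm))
          * ((-(qm / (qp - qm))) * (q - qm) ^ (-(qm / (qp - qm)) - 1) * 1)
        = -q * (qp - q) ^ (qm / (qp - qm)) * (q - qm) ^ (-(qp / (qp - qm))) := by
      rw [ea, eb]
      have e1 : (qp - q) ^ (qp / (qp - qm))
          = (qp - q) ^ (qm / (qp - qm)) * (qp - q) := by
        rw [← Real.rpow_add_one hA.ne']
        congr 1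
        field_simp
        ring
      have e2 : (q - qm) ^ (-(qm / (qp - qm)))
          = (q - qm) ^ (-(qp / (qp - qm))) * (q - qm) := by
        rw [← Real.rpow_add_one hB.ne']
        congr 1
        field_simp
        ring
      rw [e1, e2]
      generalize (qp - q) ^ (qm / (qp - qm)) = P
      generalize (q - qm) ^ (-(qp / (qp - qm))) = Q
      field_simp
      ring
    rw [← hkey]
    exact hg.congr_of_eventuallyEq heq
  -- monotone on (qm, 0]
  have hmono : StrictMonoOn r (Set.Ioc qm 0) := by
    apply strictMonoOn_of_deriv_pos (convex_Ioc qm 0)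
    · intro x hx
      exact (hderiv x ⟨hx.1, lt_of_le_of_lt hx.2 hqp0⟩).continuousAt.continuousWithinAt
    · intro x hx
      rw [interior_Ioc] at hx
      rw [(hderiv x ⟨hx.1, hx.2.trans hqp0⟩).deriv]
      have h1 : 0 < qp - x := sub_pos.mpr (hx.2.trans hqp0)
      have h2 : 0 < x - qm := sub_pos.mpr hx.1
      exact mul_pos (mul_pos (neg_pos.mpr hx.2) (Real.rpow_pos_of_pos h1 _))
        (Real.rpow_pos_of_pos h2 _)
  -- antitone on [0, qp)
  have hanti : StrictAntiOn r (Set.Ico 0 qp) := by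
    apply strictAntiOn_of_deriv_neg (convex_Ico 0 qp)
    · intro x hx
      exact (hderiv x ⟨lt_of_lt_of_le hqm0 hx.1, hx.2⟩).continuousAt.continuousWithinAt
    · intro x hx
      rw [interior_Ico] at hx
      rw [(hderiv x ⟨hqm0.trans hx.1, hx.2⟩).deriv]
      have h1 : 0 < qp - x := sub_pos.mpr hx.2
      have h2 : 0 < x - qm := sub_pos.mpr (hqm0.trans hx.1)
      have hx0 : -x < 0 := neg_neg_iff_pos.mpr hx.1
      exact mul_neg_of_neg_of_pos
        (mul_neg_of_neg_of_pos hx0 (Real.rpow_pos_of_pos h1 _))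
        (Real.rpow_pos_of_pos h2 _)
  have r0 : r 0 = rstar := by
    rw [hr 0, hstar]
    simp [zero_sub, abs_neg]
  refine ⟨fun q hq _ => hderiv q hq, hmono.mono Set.Ioo_subset_Ioc_self,
    hanti.mono Set.Ioo_subset_Ico_self, r0, ?_⟩
  intro q hq hq0
  rcases lt_or_gt_of_ne hq0 with h | h
  · have := hmono ⟨hq.1, h.le⟩ ⟨hqm0, le_refl 0⟩ h
    linarith [r0]
  · have := hanti ⟨le_refl 0, hqp0⟩ ⟨h.le, hq.2⟩ h
    linarith [r0]
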